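/- Let ν(v) := v(x̄) for a fixed state x̄, and suppose P(x̄|x,a) > 0 for all state-action pairs (x,a), and the loss ℓ has slopes in [ε₁, L₁] with ε₁ > 0. Then the shortfall-risk map R(v|x,a) := SR_{P(·|x,a)}(v) satisfies the Doeblin-type condition: there exists ᾱ ∈ (0,1) (any ᾱ < (ε₁/L₁)·min_{(x,a)} P(x̄|x,a)) such that for all v ≥ w pointwise and all (x,a), R(v|x,a) − ᾱ·ν(v) − R(w|x,a) + ᾱ·ν(w) ≥ 0. -/

import Mathlib

open Finset

noncomputable def shortfallRisk {X : Type*} [Fintype X]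
    (μ : X → ℝ) (ℓ : ℝ → ℝ) (v : X → ℝ) : ℝ :=
  sInf {m : ℝ | ∑ y, μ y * ℓ (v y - m) ≤ 0}

theorem stmt_12 {X A : Type*} [Fintype X] [Fintype A] [Nonempty X] [Nonempty A]
    (P : X → A → X → ℝ)
    (hP0 : ∀ x a y, 0 ≤ P x a y) (hP1 : ∀ x a, ∑ y, P x a y = 1)
    (ℓ : ℝ → ℝ) (hℓ0 : ℓ 0 = 0) (hinc : StrictMono ℓ)
    (ε₁ L₁ : ℝ) (hε : 0 < ε₁)
    (hslope : ∀ x y : ℝ, x ≠ y → ε₁ ≤ (ℓ x - ℓ y) / (x - y) ∧ (ℓ x - ℓ y) / (x - y) ≤ L₁)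
    (xbar : X) (hxbar : ∀ x a, 0 < P x a xbar) :
    ∀ α : ℝ, 0 < α →
      α < (ε₁ / L₁) * (univ.inf' univ_nonempty (fun p : X × A => P p.1 p.2 xbar)) →
      ∀ v w : X → ℝ, (∀ y, w y ≤ v y) → ∀ x a,
        0 ≤ shortfallRisk (P x a) ℓ v - α * v xbar
              - shortfallRisk (P x a) ℓ w + α * w xbar := by
  intro α hα hαlt v w hvw x a
  classical
  set μ := P x a with hμdef
  have hμ0 : ∀ y, 0 ≤ μ y := hP0 x a
  have hμ1 : ∑ y, μ y = 1 := hP1 x a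
  have hp : 0 < μ xbar := hxbar x a
  have hεL : ε₁ ≤ L₁ := by
    have h := hslope 1 0 one_ne_zero
    simp [hℓ0] at h
    linarith [h.1, h.2]
  have hL : 0 < L₁ := lt_of_lt_of_le hε hεL
  -- basic slope bounds
  have hsl : ∀ s t : ℝ, s ≤ t → ε₁ * (t - s) ≤ ℓ t - ℓ s ∧ ℓ t - ℓ s ≤ L₁ * (t - s) := by
    intro s t hst
    rcases eq_or_lt_of_le hst with rfl | h
    · simp
    · have h' := hslope t s (ne_of_gt h)
      have hts : 0 < t - s := by linarith
      constructor
      · have := mul_le_mul_of_nonneg_right h'.1 hts.le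
        calc ε₁ * (t - s) ≤ ((ℓ t - ℓ s) / (t - s)) * (t - s) := this
          _ = ℓ t - ℓ s := by field_simp
      · calc ℓ t - ℓ s = ((ℓ t - ℓ s) / (t - s)) * (t - s) := by field_simp
          _ ≤ L₁ * (t - s) := mul_le_mul_of_nonneg_right h'.2 hts.le
  set g : (X → ℝ) → ℝ → ℝ := fun u m => ∑ y, μ y * ℓ (u y - m) with hg
  have hSdef : ∀ u : X → ℝ, shortfallRisk μ ℓ u = sInf {m | g u m ≤ 0} := fun u => rfl
  -- nonemptiness of the sets
  have hne : ∀ u : X → ℝ, (univ.sup' univ_nonempty u) ∈ {m | g u m ≤ 0} := by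
    intro u
    simp only [Set.mem_setOf_eq, hg]
    apply Finset.sum_nonpos
    intro y _
    apply mul_nonpos_of_nonneg_of_nonpos (hμ0 y)
    have : u y - univ.sup' univ_nonempty u ≤ 0 := by
      have := Finset.le_sup' u (Finset.mem_univ y)
      linarith
    calc ℓ (u y - univ.sup' univ_nonempty u) ≤ ℓ 0 := hinc.monotone this
      _ = 0 := hℓ0
  -- Lipschitz bound
  have hlip : ∀ (u : X → ℝ) (m m' : ℝ), m ≤ m' → g u m - g u m' ≤ L₁ * (m' - m) := by
    intro u m m' hmm
    have : g u m - g u m' = ∑ y, μ y * (ℓ (u y - m) - ℓ (u y - m')) := by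
      rw [hg]
      simp only [mul_sub]
      rw [Finset.sum_sub_distrib]
    rw [this]
    calc ∑ y, μ y * (ℓ (u y - m) - ℓ (u y - m'))
        ≤ ∑ y, μ y * (L₁ * (m' - m)) := by
          apply Finset.sum_le_sum
          intro y _
          apply mul_le_mul_of_nonneg_left _ (hμ0 y)
          have h1 := (hsl (u y - m') (u y - m) (by linarith)).2
          have : (u y - m) - (u y - m') = m' - m := by ring
          rw [this] at h1
          exact h1
      _ = L₁ * (m' - m) := by rw [← Finset.sum_mul, hμ1, one_mul]
  -- bounded below
  have hbdd : BddBelow {m | g w m ≤ 0} := by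
    refine ⟨univ.inf' univ_nonempty w, ?_⟩
    intro m hm
    by_contra h
    push_neg at h
    have hpos : 0 < g w m := by
      have hterm : ∀ y ∈ (univ : Finset X), 0 ≤ μ y * ℓ (w y - m) := by
        intro y _
        apply mul_nonneg (hμ0 y)
        have : 0 ≤ w y - m := by
          have := Finset.inf'_le w (Finset.mem_univ y)
          linarith
        calc (0:ℝ) = ℓ 0 := hℓ0.symm
          _ ≤ ℓ (w y - m) := hinc.monotone this
      have hx : 0 < μ xbar * ℓ (w xbar - m) := by
        apply mul_pos hp
        have : 0 < w xbar - m := by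
          have := Finset.inf'_le w (Finset.mem_univ xbar)
          linarith
        calc (0:ℝ) = ℓ 0 := hℓ0.symm
          _ < ℓ (w xbar - m) := hinc this
      calc (0:ℝ) < μ xbar * ℓ (w xbar - m) := hx
        _ ≤ g w m := Finset.single_le_sum hterm (Finset.mem_univ xbar)
    exact absurd hm (not_le.mpr hpos)
  set mw := sInf {m | g w m ≤ 0} with hmw
  clear_value mw
  have hnotin : ∀ m' : ℝ, m' < mw → ¬ (g w m' ≤ 0) := by
    intro m' hm' hmem
    have h := csInf_le hbdd hmem
    rw [← hmw] at h
    exact absurd h (not_le.mpr hm')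
  have hgw0 : 0 ≤ g w mw := by
    by_contra h
    push_neg at h
    set η := -g w mw with hη
    clear_value η
    have hηpos : 0 < η := by rw [hη]; linarith
    have hm' : mw - η / L₁ < mw := by
      have : 0 < η / L₁ := div_pos hηpos hL
      linarith
    have h1 : ¬ (g w (mw - η / L₁) ≤ 0) := hnotin _ hm'
    have h2 := hlip w (mw - η / L₁) mw (le_of_lt hm')
    have : L₁ * (mw - (mw - η / L₁)) = η := by field_simp; ring
    rw [this] at h2
    apply h1
    linarith
  set Δ := v xbar - w xbar with hΔdef
  clear_value Δ
  have hΔ : 0 ≤ Δ := by rw [hΔdef]; have := hvw xbar; linarith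
  -- key bound for every element of the v-set
  have hkey : ∀ m ∈ {m | g v m ≤ 0}, mw + α * Δ ≤ m := by
    intro m hm
    simp only [Set.mem_setOf_eq] at hm
    have hcomp : μ xbar * (ε₁ * Δ) ≤ g v m - g w m := by
      have heq : g v m - g w m = ∑ y, μ y * (ℓ (v y - m) - ℓ (w y - m)) := by
        rw [hg]
        simp only [mul_sub]
        rw [Finset.sum_sub_distrib]
      rw [heq]
      have hsum : (∑ y, if y = xbar then μ xbar * (ε₁ * Δ) else 0) = μ xbar * (ε₁ * Δ) := by
        rw [Finset.sum_ite_eq' univ xbar (fun _ => μ xbar * (ε₁ * Δ))]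
        simp
      rw [← hsum]
      apply Finset.sum_le_sum
      intro y _
      by_cases hy : y = xbar
      · subst hy
        simp only [if_pos rfl]
        apply mul_le_mul_of_nonneg_left _ (hμ0 y)
        have h1 := (hsl (w y - m) (v y - m) (by have := hvw y; linarith)).1
        have : (v y - m) - (w y - m) = v y - w y := by ring
        rw [this] at h1
        rw [hΔdef]
        linarith [h1]
      · simp only [if_neg hy]
        apply mul_nonneg (hμ0 y)
        have h1 := (hsl (w y - m) (v y - m) (by have := hvw y; linarith)).1
        nlinarith [hvw y, hε.le]
    have hgwm : g w m ≤ -(μ xbar * (ε₁ * Δ)) := by linarith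
    have hnn : 0 ≤ μ xbar * (ε₁ * Δ) := by positivity
    have hmwm : mw ≤ m := by
      by_contra h
      push_neg at h
      have := hnotin m h
      apply this
      linarith
    have h2 := hlip w mw m hmwm
    have hmain : μ xbar * (ε₁ * Δ) ≤ L₁ * (m - mw) := by linarith
    -- α bound
    have hinf : (univ.inf' univ_nonempty (fun p : X × A => P p.1 p.2 xbar)) ≤ μ xbar := by
      exact Finset.inf'_le (fun p : X × A => P p.1 p.2 xbar) (Finset.mem_univ (x, a))
    have hαp : α ≤ ε₁ / L₁ * μ xbar := by
      have h3 : ε₁ / L₁ * (univ.inf' univ_nonempty (fun p : X × A => P p.1 p.2 xbar))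
          ≤ ε₁ / L₁ * μ xbar := by
        apply mul_le_mul_of_nonneg_left hinf (by positivity)
      linarith
    have h4 : α * Δ ≤ (ε₁ / L₁ * μ xbar) * Δ := mul_le_mul_of_nonneg_right hαp hΔ
    have h5 : (ε₁ / L₁ * μ xbar) * Δ ≤ m - mw := by
      rw [div_mul_eq_mul_div, div_mul_eq_mul_div, div_le_iff₀ hL]
      nlinarith
    linarith
  have hv : mw + α * Δ ≤ shortfallRisk μ ℓ v := by
    rw [hSdef]
    exact le_csInf ⟨_, hne v⟩ hkey
  have hw : shortfallRisk μ ℓ w = mw := by rw [hSdef]; exact hmw.symm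
  rw [hw]
  rw [hΔdef] at hv
  linarith
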